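/- Consider the system of linear equations and inequalities over nonnegative reals: for each nonempty subset T of {1,...,k}, Σ_{j∈T} x_T^j = n_T (where n_T are given nonnegative integers), and for each j ∈ {1,...,k}, L ≤ Σ_{T ∋ j} x_T^j ≤ U (where L ≤ U are nonnegative integers). If this system has a feasible real-valued solution, then it has a feasible solution in which all variables are nonnegative integers. -/
import Mathlib

open Finset

variable {k : ℕ}

/-- Cumulative supplies: total supply of rows contained in `S`. -/
def aSet (m : Finset (Fin k) → ℕ) (S : Finset (Fin k)) : ℕ := ∑ T ∈ S.powerset, m T

lemma powerset_inter' (A B : Finset (Fin k)) :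
    (A ∩ B).powerset = A.powerset ∩ B.powerset := by
  ext T
  rw [Finset.mem_powerset, Finset.mem_inter, Finset.mem_powerset, Finset.mem_powerset,
    Finset.subset_inter_iff]

lemma aSet_mono (m : Finset (Fin k) → ℕ) {A B : Finset (Fin k)} (h : A ⊆ B) :
    aSet m A ≤ aSet m B :=
  Finset.sum_le_sum_of_subset (Finset.powerset_mono.2 h)

lemma aSet_supermod (m : Finset (Fin k) → ℕ) (A B : Finset (Fin k)) :
    aSet m A + aSet m B
      + ∑ T ∈ (A ∪ B).powerset \ (A.powerset ∪ B.powerset), m T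
      = aSet m (A ∪ B) + aSet m (A ∩ B) := by
  have hsub : A.powerset ∪ B.powerset ⊆ (A ∪ B).powerset := by
    intro T hT
    simp only [Finset.mem_union, Finset.mem_powerset] at hT ⊢
    rcases hT with h | h
    · exact h.trans Finset.subset_union_left
    · exact h.trans Finset.subset_union_right
  have h1 : ∑ T ∈ A.powerset ∪ B.powerset, m T + ∑ T ∈ A.powerset ∩ B.powerset, m T
      = aSet m A + aSet m B := Finset.sum_union_inter
  have h2 : ∑ T ∈ (A ∪ B).powerset \ (A.powerset ∪ B.powerset), m T
      + ∑ T ∈ A.powerset ∪ B.powerset, m T = aSet m (A ∪ B) :=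
    Finset.sum_sdiff hsub
  simp only [aSet] at *
  rw [powerset_inter']
  omega

section C
variable (m : Finset (Fin k) → ℕ) (d : Fin k → ℕ)

lemma tight_lattice (hcon : ∀ S, aSet m S ≤ ∑ j ∈ S, d j)
    {A B : Finset (Fin k)} (hA : ∑ j ∈ A, d j = aSet m A) (hB : ∑ j ∈ B, d j = aSet m B) :
    (∑ j ∈ A ∪ B, d j = aSet m (A ∪ B)) ∧ (∑ j ∈ A ∩ B, d j = aSet m (A ∩ B)) ∧
      ∀ T ∈ (A ∪ B).powerset \ (A.powerset ∪ B.powerset), m T = 0 := by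
  have hmod : ∑ j ∈ A ∪ B, d j + ∑ j ∈ A ∩ B, d j = ∑ j ∈ A, d j + ∑ j ∈ B, d j :=
    Finset.sum_union_inter
  have hsup := aSet_supermod m A B
  have h1 := hcon (A ∪ B)
  have h2 := hcon (A ∩ B)
  have hzero : ∑ T ∈ (A ∪ B).powerset \ (A.powerset ∪ B.powerset), m T = 0 := by omega
  refine ⟨by omega, by omega, ?_⟩
  intro T hT
  exact (Finset.sum_eq_zero_iff.1 hzero) T hT

lemma tight_sup (hm : m ∅ = 0) (hcon : ∀ S, aSet m S ≤ ∑ j ∈ S, d j)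
    (𝒮 : Finset (Finset (Fin k))) (h : ∀ S ∈ 𝒮, ∑ j ∈ S, d j = aSet m S) :
    (∑ j ∈ 𝒮.sup id, d j = aSet m (𝒮.sup id)) ∧
      ∀ T, m T ≠ 0 → T ⊆ 𝒮.sup id → ∃ S ∈ 𝒮, T ⊆ S := by
  classical
  induction 𝒮 using Finset.induction_on with
  | empty =>
      constructor
      · simp [aSet, hm]
      · intro T hT hsub
        simp only [Finset.sup_empty, Finset.bot_eq_empty, Finset.subset_empty] at hsub
        exact absurd (hsub ▸ hm) hT
  | @insert S 𝒮 hnotmem ih =>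
      have hS : ∑ j ∈ S, d j = aSet m S := h S (Finset.mem_insert_self _ _)
      have h' : ∀ S' ∈ 𝒮, ∑ j ∈ S', d j = aSet m S' := fun S' hS' =>
        h S' (Finset.mem_insert_of_mem hS')
      obtain ⟨ihW, ihT⟩ := ih h'
      have hsup : (insert S 𝒮).sup id = S ∪ 𝒮.sup id := by
        simp [Finset.sup_insert]
      obtain ⟨hu, _, hz⟩ := tight_lattice m d hcon hS ihW
      rw [hsup]
      refine ⟨hu, ?_⟩
      intro T hT hsub
      by_cases hcase : T ∈ S.powerset ∪ (𝒮.sup id).powerset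
      · rcases Finset.mem_union.1 hcase with hc | hc
        · exact ⟨S, Finset.mem_insert_self _ _, Finset.mem_powerset.1 hc⟩
        · obtain ⟨S', hS', hTS'⟩ := ihT T hT (Finset.mem_powerset.1 hc)
          exact ⟨S', Finset.mem_insert_of_mem hS', hTS'⟩
      · exact absurd (hz T (Finset.mem_sdiff.2 ⟨Finset.mem_powerset.2 hsub, hcase⟩)) hT

end C

lemma stepC : ∀ (N : ℕ) (m : Finset (Fin k) → ℕ) (d : Fin k → ℕ), m ∅ = 0 →
    (∑ T, m T) = N → (∑ j, d j) = N → (∀ S, aSet m S ≤ ∑ j ∈ S, d j) →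
    ∃ y : Finset (Fin k) → Fin k → ℕ,
      (∀ T, ∑ j ∈ T, y T j = m T) ∧
      (∀ j, ∑ T, (if j ∈ T then y T j else 0) = d j) := by
  intro N
  induction N with
  | zero =>
      intro m d hm hmN hdN hcon
      refine ⟨fun _ _ => 0, ?_, ?_⟩
      · intro T
        have : m T = 0 := by
          have := Finset.sum_eq_zero_iff.1 hmN T (Finset.mem_univ T)
          exact this
        simp [this]
      · intro j
        have : d j = 0 := Finset.sum_eq_zero_iff.1 hdN j (Finset.mem_univ j)
        simp [this]
  | succ N ih =>
      intro m d hm hmN hdN hcon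
      classical
      -- find a row with positive supply
      have hex : ∃ T0, m T0 ≠ 0 := by
        by_contra hno
        push_neg at hno
        have : (∑ T, m T) = 0 := Finset.sum_eq_zero fun T _ => hno T
        omega
      obtain ⟨T0, hT0⟩ := hex
      have hT0ne : T0 ≠ ∅ := fun h => hT0 (h ▸ hm)
      -- find a good column j0 ∈ T0
      have hj0 : ∃ j0 ∈ T0, d j0 ≠ 0 ∧
          ∀ S, (∑ j ∈ S, d j = aSet m S) → j0 ∈ S → T0 ⊆ S := by
        by_contra hno
        push_neg at hno
        -- every j ∈ T0 with d j ≠ 0 lies in a tight set avoiding T0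
        have hch : ∀ j : Fin k, ∃ S : Finset (Fin k),
            (j ∈ T0 ∧ d j ≠ 0) → ((∑ i ∈ S, d i = aSet m S) ∧ j ∈ S ∧ ¬T0 ⊆ S) := by
          intro j
          by_cases hj : j ∈ T0 ∧ d j ≠ 0
          · obtain ⟨S, hS1, hS2, hS3⟩ := hno j hj.1 hj.2
            exact ⟨S, fun _ => ⟨hS1, hS2, hS3⟩⟩
          · exact ⟨∅, fun h => absurd h hj⟩
        choose f hf using hch
        set 𝒮 : Finset (Finset (Fin k)) := (T0.filter (fun j => d j ≠ 0)).image f with h𝒮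
        have htight : ∀ S ∈ 𝒮, ∑ j ∈ S, d j = aSet m S := by
          intro S hS
          obtain ⟨j, hj, rfl⟩ := Finset.mem_image.1 hS
          obtain ⟨hj1, hj2⟩ := Finset.mem_filter.1 hj
          exact (hf j ⟨hj1, hj2⟩).1
        set W := 𝒮.sup id with hW
        obtain ⟨hWt, hWT⟩ := tight_sup m d hm hcon 𝒮 htight
        by_cases hTW : T0 ⊆ W
        · obtain ⟨S, hS, hTS⟩ := hWT T0 hT0 hTW
          obtain ⟨j, hj, rfl⟩ := Finset.mem_image.1 hS
          obtain ⟨hj1, hj2⟩ := Finset.mem_filter.1 hj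
          exact (hf j ⟨hj1, hj2⟩).2.2 hTS
        · -- all of T0 \ W has d = 0, contradiction with the constraint on W ∪ T0
          have hd0 : ∀ j ∈ (W ∪ T0) \ W, d j = 0 := by
            intro j hj
            obtain ⟨hj1, hj2⟩ := Finset.mem_sdiff.1 hj
            have hjT0 : j ∈ T0 := by
              rcases Finset.mem_union.1 hj1 with h | h
              · exact absurd h hj2
              · exact h
            by_contra hdj
            have : j ∈ f j := (hf j ⟨hjT0, hdj⟩).2.1
            have : f j ∈ 𝒮 := Finset.mem_image_of_mem f (Finset.mem_filter.2 ⟨hjT0, hdj⟩)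
            exact hj2 (Finset.mem_sup.2 ⟨f j, this, (hf j ⟨hjT0, hdj⟩).2.1⟩)
          have hsum1 : ∑ j ∈ W ∪ T0, d j = ∑ j ∈ W, d j := by
            have hWsub : W ⊆ W ∪ T0 := Finset.subset_union_left
            have := Finset.sum_sdiff (f := d) hWsub
            have hz : ∑ j ∈ (W ∪ T0) \ W, d j = 0 := Finset.sum_eq_zero hd0
            omega
          have haW : aSet m W + m T0 ≤ aSet m (W ∪ T0) := by
            have hins : insert T0 W.powerset ⊆ (W ∪ T0).powerset := by
              intro T hT
              rcases Finset.mem_insert.1 hT with rfl | hT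
              · exact Finset.mem_powerset.2 Finset.subset_union_right
              · exact Finset.mem_powerset.2
                  ((Finset.mem_powerset.1 hT).trans Finset.subset_union_left)
            have hTnot : T0 ∉ W.powerset := fun h => hTW (Finset.mem_powerset.1 h)
            calc aSet m W + m T0 = ∑ T ∈ insert T0 W.powerset, m T := by
                  rw [Finset.sum_insert hTnot, aSet, Nat.add_comm]
              _ ≤ aSet m (W ∪ T0) := Finset.sum_le_sum_of_subset hins
          have hWt' : ∑ j ∈ W, d j = aSet m W := hWt
          have := hcon (W ∪ T0)
          omega
      obtain ⟨j0, hj0T, hdj0, hj0good⟩ := hj0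
      -- decrement
      set m' := Function.update m T0 (m T0 - 1) with hm'
      set d' := Function.update d j0 (d j0 - 1) with hd'
      have hm'T : ∀ T ≠ T0, m' T = m T := fun T hT => Function.update_of_ne hT _ m
      have hd'j : ∀ j ≠ j0, d' j = d j := fun j hj => Function.update_of_ne hj _ d
      have hm'T0 : m' T0 = m T0 - 1 := Function.update_self _ _ _
      have hd'j0 : d' j0 = d j0 - 1 := Function.update_self _ _ _
      -- sums
      have hsumm : ∑ T, m' T = N := by
        have e1 : ∑ T, m' T = m' T0 + ∑ T ∈ Finset.univ.erase T0, m' T :=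
          (Finset.add_sum_erase _ _ (Finset.mem_univ T0)).symm
        have e2 : ∑ T, m T = m T0 + ∑ T ∈ Finset.univ.erase T0, m T :=
          (Finset.add_sum_erase _ _ (Finset.mem_univ T0)).symm
        have e3 : ∑ T ∈ Finset.univ.erase T0, m' T = ∑ T ∈ Finset.univ.erase T0, m T :=
          Finset.sum_congr rfl fun T hT => hm'T T (Finset.ne_of_mem_erase hT)
        omega
      have hsumd : ∑ j, d' j = N := by
        have e1 : ∑ j, d' j = d' j0 + ∑ j ∈ Finset.univ.erase j0, d' j :=
          (Finset.add_sum_erase _ _ (Finset.mem_univ j0)).symm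
        have e2 : ∑ j, d j = d j0 + ∑ j ∈ Finset.univ.erase j0, d j :=
          (Finset.add_sum_erase _ _ (Finset.mem_univ j0)).symm
        have e3 : ∑ j ∈ Finset.univ.erase j0, d' j = ∑ j ∈ Finset.univ.erase j0, d j :=
          Finset.sum_congr rfl fun j hj => hd'j j (Finset.ne_of_mem_erase hj)
        omega
      -- aSet of m'
      have haS : ∀ S, (T0 ⊆ S → aSet m' S + 1 = aSet m S) ∧ (¬T0 ⊆ S → aSet m' S = aSet m S) := by
        intro S
        constructor
        · intro hsub
          have hmem : T0 ∈ S.powerset := Finset.mem_powerset.2 hsub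
          have e1 : aSet m' S = m' T0 + ∑ T ∈ S.powerset.erase T0, m' T :=
            (Finset.add_sum_erase _ _ hmem).symm
          have e2 : aSet m S = m T0 + ∑ T ∈ S.powerset.erase T0, m T :=
            (Finset.add_sum_erase _ _ hmem).symm
          have e3 : ∑ T ∈ S.powerset.erase T0, m' T = ∑ T ∈ S.powerset.erase T0, m T :=
            Finset.sum_congr rfl fun T hT => hm'T T (Finset.ne_of_mem_erase hT)
          omega
        · intro hsub
          exact Finset.sum_congr rfl fun T hT =>
            hm'T T (fun h => hsub (h ▸ Finset.mem_powerset.1 hT))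
      have hdS : ∀ S, (j0 ∈ S → ∑ j ∈ S, d' j + 1 = ∑ j ∈ S, d j) ∧
          (j0 ∉ S → ∑ j ∈ S, d' j = ∑ j ∈ S, d j) := by
        intro S
        constructor
        · intro hmem
          have e1 : ∑ j ∈ S, d' j = d' j0 + ∑ j ∈ S.erase j0, d' j :=
            (Finset.add_sum_erase _ _ hmem).symm
          have e2 : ∑ j ∈ S, d j = d j0 + ∑ j ∈ S.erase j0, d j :=
            (Finset.add_sum_erase _ _ hmem).symm
          have e3 : ∑ j ∈ S.erase j0, d' j = ∑ j ∈ S.erase j0, d j :=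
            Finset.sum_congr rfl fun j hj => hd'j j (Finset.ne_of_mem_erase hj)
          omega
        · intro hmem
          exact Finset.sum_congr rfl fun j hj => hd'j j (fun h => hmem (h ▸ hj))
      -- constraints for m', d'
      have hcon' : ∀ S, aSet m' S ≤ ∑ j ∈ S, d' j := by
        intro S
        have h0 := hcon S
        by_cases hj0S : j0 ∈ S
        · by_cases hTS : T0 ⊆ S
          · have := (haS S).1 hTS
            have := (hdS S).1 hj0S
            omega
          · have h1 := (haS S).2 hTS
            have h2 := (hdS S).1 hj0S
            have hnt : ∑ j ∈ S, d j ≠ aSet m S := fun h => hTS (hj0good S h hj0S)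
            omega
        · have hTS : ¬T0 ⊆ S := fun h => hj0S (h hj0T)
          have h1 := (haS S).2 hTS
          have h2 := (hdS S).2 hj0S
          omega
      have hm'emp : m' ∅ = 0 := by rw [hm'T ∅ (Ne.symm hT0ne)]; exact hm
      obtain ⟨y', hy'row, hy'col⟩ := ih m' d' hm'emp hsumm hsumd hcon'
      refine ⟨fun T j => y' T j + if T = T0 ∧ j = j0 then 1 else 0, ?_, ?_⟩
      · intro T
        rw [Finset.sum_add_distrib]
        by_cases hT : T = T0
        · rw [hy'row, hT]
          have h1 : ∑ j ∈ T0, (if T0 = T0 ∧ j = j0 then (1:ℕ) else 0) = 1 := by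
            have he : ∀ j ∈ T0, (if T0 = T0 ∧ j = j0 then (1:ℕ) else 0)
                = if j = j0 then 1 else 0 := by intro j _; simp
            rw [Finset.sum_congr rfl he, Finset.sum_ite_eq' T0 j0 (fun _ => (1:ℕ))]
            simp [hj0T]
          rw [h1, hm'T0]
          omega
        · have h1 : ∑ j ∈ T, (if T = T0 ∧ j = j0 then (1:ℕ) else 0) = 0 :=
            Finset.sum_eq_zero fun j _ => by simp [hT]
          rw [hy'row, h1, hm'T T hT]
          omega
      · intro j
        have hsplit : ∀ T : Finset (Fin k),
            (if j ∈ T then y' T j + (if T = T0 ∧ j = j0 then 1 else 0) else 0)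
            = (if j ∈ T then y' T j else 0) + (if j ∈ T then (if T = T0 ∧ j = j0 then 1 else 0) else 0) := by
          intro T; by_cases h : j ∈ T <;> simp [h]
        rw [Finset.sum_congr rfl fun T _ => hsplit T, Finset.sum_add_distrib, hy'col]
        by_cases hj : j = j0
        · have h1 : ∑ T : Finset (Fin k),
              (if j ∈ T then (if T = T0 ∧ j = j0 then (1:ℕ) else 0) else 0) = 1 := by
            have he : ∀ T ∈ (Finset.univ : Finset (Finset (Fin k))),
                (if j ∈ T then (if T = T0 ∧ j = j0 then (1:ℕ) else 0) else 0)
                = if T = T0 then 1 else 0 := by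
              intro T _
              by_cases hTT : T = T0
              · subst hTT; simp [hj, hj0T]
              · simp [hTT]
            rw [Finset.sum_congr rfl he,
              Finset.sum_ite_eq' Finset.univ T0 (fun _ => (1:ℕ))]
            simp
          rw [h1, hj, hd'j0]
          omega
        · have h1 : ∑ T : Finset (Fin k), (if j ∈ T then (if T = T0 ∧ j = j0 then (1:ℕ) else 0) else 0) = 0 :=
            Finset.sum_eq_zero fun T _ => by
              by_cases h : j ∈ T <;> simp [h, hj]
          rw [h1, hd'j j hj]
          omega

section B
open Classical

lemma exists_int_sum {α : Type*} (S : Finset α) (f : α → ℝ)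
    (h : ∀ j ∈ S, ∃ z : ℤ, f j = (z : ℝ)) : ∃ z : ℤ, ∑ j ∈ S, f j = (z : ℝ) := by
  classical
  induction S using Finset.induction_on with
  | empty => exact ⟨0, by simp⟩
  | @insert a s ha ih =>
      obtain ⟨z, hz⟩ := h a (Finset.mem_insert_self _ _)
      obtain ⟨w, hw⟩ := ih fun j hj => h j (Finset.mem_insert_of_mem hj)
      exact ⟨z + w, by rw [Finset.sum_insert ha, hz, hw]; push_cast; ring⟩

lemma not_int_bounds {x : ℝ} (h : ¬∃ z : ℤ, x = (z : ℝ)) :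
    ((⌊x⌋ : ℤ) : ℝ) < x ∧ x < ((⌈x⌉ : ℤ) : ℝ) := by
  constructor
  · rcases lt_or_eq_of_le (Int.floor_le x) with h' | h'
    · exact h'
    · exact absurd ⟨⌊x⌋, h'.symm⟩ h
  · rcases lt_or_eq_of_le (Int.le_ceil x) with h' | h'
    · exact h'
    · exact absurd ⟨⌈x⌉, h'⟩ h

lemma tight_lattice_real (m : Finset (Fin k) → ℕ) (c : Fin k → ℝ)
    (hcon : ∀ S, ((aSet m S : ℕ) : ℝ) ≤ ∑ j ∈ S, c j)
    {A B : Finset (Fin k)} (hA : ∑ j ∈ A, c j = (aSet m A : ℝ))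
    (hB : ∑ j ∈ B, c j = (aSet m B : ℝ)) :
    (∑ j ∈ A ∪ B, c j = (aSet m (A ∪ B) : ℝ)) ∧
      (∑ j ∈ A ∩ B, c j = (aSet m (A ∩ B) : ℝ)) := by
  have hmod : ∑ j ∈ A ∪ B, c j + ∑ j ∈ A ∩ B, c j = ∑ j ∈ A, c j + ∑ j ∈ B, c j :=
    Finset.sum_union_inter
  have hsupN : aSet m A + aSet m B ≤ aSet m (A ∪ B) + aSet m (A ∩ B) := by
    have := aSet_supermod m A B
    omega
  have hsup : ((aSet m A : ℕ) : ℝ) + (aSet m B : ℕ) ≤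
      ((aSet m (A ∪ B) : ℕ) : ℝ) + (aSet m (A ∩ B) : ℕ) := by exact_mod_cast hsupN
  have h1 := hcon (A ∪ B)
  have h2 := hcon (A ∩ B)
  constructor <;> linarith

end B

open Classical in
noncomputable def fracCount {k : ℕ} (c : Fin k → ℝ) : ℕ :=
  (Finset.univ.filter (fun j => ¬∃ z : ℤ, c j = (z : ℝ))).card

open Classical in
noncomputable def ntCount {k : ℕ} (m : Finset (Fin k) → ℕ) (c : Fin k → ℝ) : ℕ :=
  (Finset.univ.filter (fun S : Finset (Fin k) => ∑ j ∈ S, c j ≠ (aSet m S : ℝ))).card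

lemma stepB_int {k : ℕ} (m : Finset (Fin k) → ℕ) (L U : ℕ) (c : Fin k → ℝ)
    (hbox : ∀ j, (L : ℝ) ≤ c j ∧ c j ≤ (U : ℝ))
    (hsum : ∑ j, c j = (aSet m Finset.univ : ℝ))
    (hcon : ∀ S, (aSet m S : ℝ) ≤ ∑ j ∈ S, c j)
    (hfc : fracCount c = 0) :
    ∃ d : Fin k → ℕ, (∀ j, L ≤ d j ∧ d j ≤ U) ∧ (∑ j, d j = aSet m Finset.univ) ∧
      (∀ S, aSet m S ≤ ∑ j ∈ S, d j) := by
  classical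
  have hint : ∀ j : Fin k, ∃ z : ℤ, c j = (z : ℝ) := by
    intro j
    by_contra hj
    have hmem : j ∈ Finset.univ.filter (fun j => ¬∃ z : ℤ, c j = (z : ℝ)) :=
      Finset.mem_filter.2 ⟨Finset.mem_univ j, hj⟩
    rw [fracCount, Finset.card_eq_zero] at hfc
    rw [hfc] at hmem
    exact absurd hmem (Finset.notMem_empty j)
  choose z hz using hint
  have hzL : ∀ j, (L : ℤ) ≤ z j := by
    intro j
    have := (hbox j).1
    rw [hz j] at this
    exact_mod_cast this
  have hzU : ∀ j, z j ≤ (U : ℤ) := by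
    intro j
    have := (hbox j).2
    rw [hz j] at this
    exact_mod_cast this
  refine ⟨fun j => (z j).toNat, ?_, ?_, ?_⟩
  · intro j
    dsimp only
    have h1 := hzL j
    have h2 := hzU j
    omega
  · have hZ : ∑ j, z j = (aSet m Finset.univ : ℤ) := by
      have : ((∑ j, z j : ℤ) : ℝ) = ((aSet m Finset.univ : ℕ) : ℝ) := by
        push_cast
        rw [← hsum]
        exact Finset.sum_congr rfl fun j _ => (hz j).symm
      exact_mod_cast this
    have : ((∑ j, (z j).toNat : ℕ) : ℤ) = (aSet m Finset.univ : ℤ) := by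
      push_cast
      rw [← hZ]
      exact Finset.sum_congr rfl fun j _ => Int.toNat_of_nonneg (by have := hzL j; omega)
    exact_mod_cast this
  · intro S
    have hZ : (aSet m S : ℤ) ≤ ∑ j ∈ S, z j := by
      have h1 := hcon S
      have h2 : ∑ j ∈ S, c j = ((∑ j ∈ S, z j : ℤ) : ℝ) := by
        push_cast
        exact Finset.sum_congr rfl fun j _ => hz j
      rw [h2] at h1
      exact_mod_cast h1
    have : ((aSet m S : ℕ) : ℤ) ≤ ((∑ j ∈ S, (z j).toNat : ℕ) : ℤ) := by
      push_cast
      calc ((aSet m S : ℕ) : ℤ) ≤ ∑ j ∈ S, z j := hZ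
        _ = ∑ j ∈ S, ((z j).toNat : ℤ) :=
          Finset.sum_congr rfl fun j _ => (Int.toNat_of_nonneg (by have := hzL j; omega)).symm
    exact_mod_cast this

lemma stepB_aux {k : ℕ} (m : Finset (Fin k) → ℕ) (L U : ℕ) :
    ∀ (μ : ℕ) (c : Fin k → ℝ),
    (∀ j, (L : ℝ) ≤ c j ∧ c j ≤ (U : ℝ)) →
    (∑ j, c j = (aSet m Finset.univ : ℝ)) →
    (∀ S, (aSet m S : ℝ) ≤ ∑ j ∈ S, c j) →
    fracCount c * (2 ^ k + 1) + ntCount m c ≤ μ →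
    ∃ d : Fin k → ℕ, (∀ j, L ≤ d j ∧ d j ≤ U) ∧ (∑ j, d j = aSet m Finset.univ) ∧
      (∀ S, aSet m S ≤ ∑ j ∈ S, d j) := by
  classical
  intro μ
  induction μ with
  | zero =>
      intro c hbox hsum hcon hmeas
      have h1 : fracCount c * (2 ^ k + 1) = 0 := by omega
      rcases Nat.mul_eq_zero.1 h1 with h | h
      · exact stepB_int m L U c hbox hsum hcon h
      · simp at h
  | succ μ ih =>
      intro c hbox hsum hcon hmeas
      by_cases hfc0 : fracCount c = 0
      · exact stepB_int m L U c hbox hsum hcon hfc0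
      · -- there is a fractional coordinate
        obtain ⟨P, hP⟩ : ∃ P, 2 ^ k = P := ⟨_, rfl⟩
        have hfrex : ∃ jf : Fin k, ¬∃ z : ℤ, c jf = (z : ℝ) := by
          by_contra hno
          push_neg at hno
          apply hfc0
          rw [fracCount, Finset.card_eq_zero, Finset.filter_eq_empty_iff]
          intro j _
          simpa using hno j
        obtain ⟨jf, hjf⟩ := hfrex
        set 𝒯 : Finset (Finset (Fin k)) :=
          Finset.univ.filter (fun S : Finset (Fin k) =>
            (∑ j ∈ S, c j = (aSet m S : ℝ)) ∧ ∃ j ∈ S, ¬∃ z : ℤ, c j = (z : ℝ)) with h𝒯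
        have hUmem : Finset.univ ∈ 𝒯 :=
          Finset.mem_filter.2 ⟨Finset.mem_univ _, hsum, jf, Finset.mem_univ _, hjf⟩
        obtain ⟨S0, hS0mem, hS0min⟩ := Finset.exists_min_image 𝒯 Finset.card ⟨_, hUmem⟩
        obtain ⟨-, hS0t, j2, hj2S, hj2f⟩ := Finset.mem_filter.1 hS0mem
        have hj1ex : ∃ j1 ∈ S0.erase j2, ¬∃ z : ℤ, c j1 = (z : ℝ) := by
          by_contra hno
          push_neg at hno
          obtain ⟨w, hw⟩ := exists_int_sum (S0.erase j2) c hno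
          apply hj2f
          have hsplit : c j2 + ∑ j ∈ S0.erase j2, c j = ∑ j ∈ S0, c j :=
            Finset.add_sum_erase _ _ hj2S
          rw [hw, hS0t] at hsplit
          exact ⟨(aSet m S0 : ℤ) - w, by push_cast; linarith⟩
        obtain ⟨j1, hj1mem, hj1f⟩ := hj1ex
        have hj1S : j1 ∈ S0 := Finset.mem_of_mem_erase hj1mem
        have hne12 : j1 ≠ j2 := Finset.ne_of_mem_erase hj1mem
        -- every tight set contains j1 iff it contains j2
        have claim : ∀ S, (∑ j ∈ S, c j = (aSet m S : ℝ)) → (j1 ∈ S ↔ j2 ∈ S) := by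
          intro S hS
          constructor
          · intro h1
            by_contra h2
            have hint := (tight_lattice_real m c hcon hS hS0t).2
            have hmem𝒯 : S ∩ S0 ∈ 𝒯 := Finset.mem_filter.2
              ⟨Finset.mem_univ _, hint, j1, Finset.mem_inter.2 ⟨h1, hj1S⟩, hj1f⟩
            have hcard := hS0min _ hmem𝒯
            have hss : S ∩ S0 ⊂ S0 := (Finset.ssubset_iff_of_subset Finset.inter_subset_right).2
              ⟨j2, hj2S, fun hmem => h2 (Finset.mem_inter.1 hmem).1⟩
            have := Finset.card_lt_card hss
            omega
          · intro h2
            by_contra h1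
            have hint := (tight_lattice_real m c hcon hS hS0t).2
            have hmem𝒯 : S ∩ S0 ∈ 𝒯 := Finset.mem_filter.2
              ⟨Finset.mem_univ _, hint, j2, Finset.mem_inter.2 ⟨h2, hj2S⟩, hj2f⟩
            have hcard := hS0min _ hmem𝒯
            have hss : S ∩ S0 ⊂ S0 := (Finset.ssubset_iff_of_subset Finset.inter_subset_right).2
              ⟨j1, hj1S, fun hmem => h1 (Finset.mem_inter.1 hmem).1⟩
            have := Finset.card_lt_card hss
            omega
        -- the step size
        set slackS : Finset (Finset (Fin k)) :=
          Finset.univ.filter (fun S => j2 ∈ S ∧ j1 ∉ S) with hslackS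
        set E : Finset ℝ := insert (((⌈c j1⌉ : ℤ) : ℝ) - c j1)
          (insert (c j2 - ((⌊c j2⌋ : ℤ) : ℝ))
          (insert ((U : ℝ) - c j1) (insert (c j2 - (L : ℝ))
          (slackS.image (fun S => ∑ j ∈ S, c j - (aSet m S : ℝ)))))) with hE
        have hEne : E.Nonempty := ⟨_, Finset.mem_insert_self _ _⟩
        have hm3 : (U : ℝ) - c j1 ∈ E :=
          Finset.mem_insert_of_mem (Finset.mem_insert_of_mem (Finset.mem_insert_self _ _))
        have hm4 : c j2 - (L : ℝ) ∈ E :=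
          Finset.mem_insert_of_mem (Finset.mem_insert_of_mem
            (Finset.mem_insert_of_mem (Finset.mem_insert_self _ _)))
        have hEpos : ∀ e ∈ E, 0 < e := by
          intro e he
          rcases Finset.mem_insert.1 he with rfl | he
          · have := (not_int_bounds hj1f).2; linarith
          rcases Finset.mem_insert.1 he with rfl | he
          · have := (not_int_bounds hj2f).1; linarith
          rcases Finset.mem_insert.1 he with rfl | he
          · have h := (hbox j1).2
            have hne : c j1 ≠ (U : ℝ) := fun hEq => hj1f ⟨(U : ℤ), by rw [hEq]; push_cast; ring⟩
            have := lt_of_le_of_ne h hne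
            linarith
          rcases Finset.mem_insert.1 he with rfl | he
          · have h := (hbox j2).1
            have hne : c j2 ≠ (L : ℝ) := fun hEq => hj2f ⟨(L : ℤ), by rw [hEq]; push_cast; ring⟩
            have := lt_of_le_of_ne h (Ne.symm hne)
            linarith
          · obtain ⟨S, hSmem, rfl⟩ := Finset.mem_image.1 he
            obtain ⟨hj2S', hj1S'⟩ := (Finset.mem_filter.1 hSmem).2
            have hle := hcon S
            have hne : ∑ j ∈ S, c j ≠ (aSet m S : ℝ) := fun ht => hj1S' ((claim S ht).2 hj2S')
            have := lt_of_le_of_ne hle (Ne.symm hne)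
            linarith
        set ε := E.min' hEne with hεdef
        have hεmem : ε ∈ E := Finset.min'_mem _ _
        have hεpos : 0 < ε := hEpos _ hεmem
        have hεle : ∀ e ∈ E, ε ≤ e := fun e he => Finset.min'_le _ _ he
        set c' : Fin k → ℝ :=
          fun j => if j = j1 then c j + ε else if j = j2 then c j - ε else c j with hc'
        have hc'j1 : c' j1 = c j1 + ε := by simp [hc']
        have hc'j2 : c' j2 = c j2 - ε := by simp [hc', hne12.symm]
        have hc'other : ∀ j, j ≠ j1 → j ≠ j2 → c' j = c j := by
          intro j h1 h2; simp [hc', h1, h2]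
        have hsumS : ∀ S : Finset (Fin k), ∑ j ∈ S, c' j
            = ∑ j ∈ S, c j + (if j1 ∈ S then ε else 0) - (if j2 ∈ S then ε else 0) := by
          intro S
          have hpt : ∀ j ∈ S,
              c' j = c j + (if j = j1 then ε else 0) - (if j = j2 then ε else 0) := by
            intro j _
            by_cases h1 : j = j1
            · subst h1; simp [hc'j1, hne12]
            · by_cases h2 : j = j2
              · subst h2; simp [hc'j2, h1]
              · simp [hc'other j h1 h2, h1, h2]
          rw [Finset.sum_congr rfl hpt, Finset.sum_sub_distrib, Finset.sum_add_distrib,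
            Finset.sum_ite_eq' S j1 (fun _ => ε), Finset.sum_ite_eq' S j2 (fun _ => ε)]
        have hbox' : ∀ j, (L : ℝ) ≤ c' j ∧ c' j ≤ (U : ℝ) := by
          intro j
          by_cases h1 : j = j1
          · rw [h1, hc'j1]
            have h := hεle _ hm3
            have := (hbox j1).1
            constructor <;> linarith
          · by_cases h2 : j = j2
            · rw [h2, hc'j2]
              have h := hεle _ hm4
              have := (hbox j2).2
              constructor <;> linarith
            · rw [hc'other j h1 h2]; exact hbox j
        have hsum' : ∑ j, c' j = (aSet m Finset.univ : ℝ) := by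
          rw [hsumS Finset.univ]
          simp only [Finset.mem_univ, if_true]
          rw [hsum]
          ring
        have hcon' : ∀ S, (aSet m S : ℝ) ≤ ∑ j ∈ S, c' j := by
          intro S
          rw [hsumS S]
          have h0 := hcon S
          by_cases h2 : j2 ∈ S
          · by_cases h1 : j1 ∈ S
            · simp only [h1, h2, if_true]; linarith
            · have hmem : ∑ j ∈ S, c j - (aSet m S : ℝ) ∈ E :=
                Finset.mem_insert_of_mem (Finset.mem_insert_of_mem (Finset.mem_insert_of_mem
                  (Finset.mem_insert_of_mem (Finset.mem_image_of_mem _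
                    (Finset.mem_filter.2 ⟨Finset.mem_univ _, h2, h1⟩)))))
              have := hεle _ hmem
              simp only [h1, h2, if_true, if_false]
              linarith
          · by_cases h1 : j1 ∈ S
            · simp only [h1, h2, if_true, if_false]; linarith
            · simp only [h1, h2, if_false]; linarith
        -- measure comparison
        have hfsub : Finset.univ.filter (fun j => ¬∃ z : ℤ, c' j = (z : ℝ))
            ⊆ Finset.univ.filter (fun j => ¬∃ z : ℤ, c j = (z : ℝ)) := by
          intro j hj
          obtain ⟨-, hj⟩ := Finset.mem_filter.1 hj
          refine Finset.mem_filter.2 ⟨Finset.mem_univ _, ?_⟩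
          by_cases h1 : j = j1
          · subst h1; exact hj1f
          · by_cases h2 : j = j2
            · subst h2; exact hj2f
            · rw [hc'other j h1 h2] at hj; exact hj
        have hfle : fracCount c' ≤ fracCount c := Finset.card_le_card hfsub
        have hntsub : Finset.univ.filter
              (fun S : Finset (Fin k) => ∑ j ∈ S, c' j ≠ (aSet m S : ℝ))
            ⊆ Finset.univ.filter
              (fun S : Finset (Fin k) => ∑ j ∈ S, c j ≠ (aSet m S : ℝ)) := by
          intro S hS
          obtain ⟨-, hS⟩ := Finset.mem_filter.1 hS
          refine Finset.mem_filter.2 ⟨Finset.mem_univ _, ?_⟩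
          intro ht
          apply hS
          rw [hsumS S]
          have hiff := claim S ht
          by_cases h1 : j1 ∈ S
          · have h2 := hiff.1 h1
            simp only [h1, h2, if_true]
            linarith
          · have h2 : j2 ∉ S := fun hh => h1 (hiff.2 hh)
            simp only [h1, h2, if_false]
            linarith
        have hnt : ntCount m c' ≤ ntCount m c := Finset.card_le_card hntsub
        have hntB : ntCount m c' ≤ P := by
          have h1 : ntCount m c' ≤ (Finset.univ : Finset (Finset (Fin k))).card :=
            Finset.card_filter_le _ _
          have h2 : (Finset.univ : Finset (Finset (Fin k))).card = 2 ^ k := by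
            rw [Finset.card_univ]; simp [Fintype.card_finset]
          rw [h2, hP] at h1
          exact h1
        rw [hP] at hmeas
        have hfpos : 1 ≤ fracCount c := Nat.one_le_iff_ne_zero.2 hfc0
        -- case analysis on which element achieves the minimum
        have hmeas' : fracCount c' * (P + 1) + ntCount m c' ≤ μ := by
          have hfrackey : ∀ j0 : Fin k, (∃ z : ℤ, c' j0 = (z : ℝ)) →
              (¬∃ z : ℤ, c j0 = (z : ℝ)) → fracCount c' * (P + 1) + ntCount m c' ≤ μ := by
            intro j0 hint hfrac
            have hlt : fracCount c' < fracCount c := by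
              apply Finset.card_lt_card
              exact (Finset.ssubset_iff_of_subset hfsub).2
                ⟨j0, Finset.mem_filter.2 ⟨Finset.mem_univ _, hfrac⟩,
                 fun hmem => (Finset.mem_filter.1 hmem).2 hint⟩
            have hmul : (fracCount c' + 1) * (P + 1) ≤ fracCount c * (P + 1) :=
              Nat.mul_le_mul_right _ hlt
            rw [Nat.succ_mul] at hmul
            omega
          rcases Finset.mem_insert.1 hεmem with he | he
          · exact hfrackey j1 ⟨⌈c j1⌉, by rw [hc'j1, he]; ring⟩ hj1f
          rcases Finset.mem_insert.1 he with he | he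
          · exact hfrackey j2 ⟨⌊c j2⌋, by rw [hc'j2, he]; ring⟩ hj2f
          rcases Finset.mem_insert.1 he with he | he
          · exact hfrackey j1 ⟨(U : ℤ), by rw [hc'j1, he]; push_cast; ring⟩ hj1f
          rcases Finset.mem_insert.1 he with he | he
          · exact hfrackey j2 ⟨(L : ℤ), by rw [hc'j2, he]; push_cast; ring⟩ hj2f
          · obtain ⟨S, hSmem, hSe⟩ := Finset.mem_image.1 he
            obtain ⟨hj2S', hj1S'⟩ := (Finset.mem_filter.1 hSmem).2
            have htight' : ∑ j ∈ S, c' j = (aSet m S : ℝ) := by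
              rw [hsumS S]
              simp only [hj2S', hj1S', if_true, if_false]
              linarith [hSe]
            have hnot : ∑ j ∈ S, c j ≠ (aSet m S : ℝ) := by
              intro ht
              rw [ht] at hSe
              simp at hSe
              linarith [hεpos, hSe]
            have hntlt : ntCount m c' < ntCount m c := by
              apply Finset.card_lt_card
              exact (Finset.ssubset_iff_of_subset hntsub).2
                ⟨S, Finset.mem_filter.2 ⟨Finset.mem_univ _, hnot⟩,
                 fun hmem => (Finset.mem_filter.1 hmem).2 htight'⟩
            have hmul : fracCount c' * (P + 1) ≤ fracCount c * (P + 1) :=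
              Nat.mul_le_mul_right _ hfle
            omega
        rw [← hP] at hmeas'
        exact ih c' hbox' hsum' hcon' hmeas'



/-- if the system `∑_{j∈T} x_T^j = n_T`, `L ≤ ∑_{T∋j} x_T^j ≤ U` has a
feasible solution over the nonnegative reals, then it has a nonnegative integral solution. -/
theorem stmt1 {k : ℕ} (n : Finset (Fin k) → ℕ) (L U : ℕ) (hLU : L ≤ U)
    (hreal : ∃ x : Finset (Fin k) → Fin k → ℝ,
      (∀ T j, 0 ≤ x T j) ∧
      (∀ T : Finset (Fin k), T.Nonempty → ∑ j ∈ T, x T j = (n T : ℝ)) ∧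
      (∀ j : Fin k,
        (L : ℝ) ≤ ∑ T : Finset (Fin k), (if j ∈ T then x T j else 0) ∧
        ∑ T : Finset (Fin k), (if j ∈ T then x T j else 0) ≤ (U : ℝ))) :
    ∃ y : Finset (Fin k) → Fin k → ℕ,
      (∀ T : Finset (Fin k), T.Nonempty → ∑ j ∈ T, y T j = n T) ∧
      (∀ j : Fin k,
        L ≤ ∑ T : Finset (Fin k), (if j ∈ T then y T j else 0) ∧
        ∑ T : Finset (Fin k), (if j ∈ T then y T j else 0) ≤ U) := by
  classical
  obtain ⟨x, hxnn, hxrow, hxcol⟩ := hreal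
  set m : Finset (Fin k) → ℕ := fun T => if T.Nonempty then n T else 0 with hm
  set c : Fin k → ℝ := fun j => ∑ T : Finset (Fin k), (if j ∈ T then x T j else 0) with hc
  have hbox : ∀ j, (L : ℝ) ≤ c j ∧ c j ≤ (U : ℝ) := hxcol
  have hrow' : ∀ T : Finset (Fin k), ∑ j ∈ T, x T j = (m T : ℝ) := by
    intro T
    by_cases hT : T.Nonempty
    · rw [hm]
      simp only [hT, if_true]
      exact hxrow T hT
    · have hTe : T = ∅ := Finset.not_nonempty_iff_eq_empty.1 hT
      subst hTe
      simp [hm]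
  have hauniv : aSet m Finset.univ = ∑ T, m T := by
    rw [aSet, Finset.powerset_univ]
  have hsum : ∑ j, c j = (aSet m Finset.univ : ℝ) := by
    rw [hc]
    calc ∑ j, ∑ T : Finset (Fin k), (if j ∈ T then x T j else 0)
        = ∑ T : Finset (Fin k), ∑ j, (if j ∈ T then x T j else 0) := Finset.sum_comm
      _ = ∑ T : Finset (Fin k), ∑ j ∈ T, x T j := by
          refine Finset.sum_congr rfl fun T _ => ?_
          rw [Finset.sum_ite_mem, Finset.univ_inter]
      _ = ∑ T : Finset (Fin k), (m T : ℝ) := Finset.sum_congr rfl fun T _ => hrow' T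
      _ = (aSet m Finset.univ : ℝ) := by rw [hauniv]; push_cast; rfl
  have hcon : ∀ S, (aSet m S : ℝ) ≤ ∑ j ∈ S, c j := by
    intro S
    have h1 : ∑ j ∈ S, c j
        = ∑ T : Finset (Fin k), ∑ j ∈ S, (if j ∈ T then x T j else 0) := by
      rw [hc]
      exact Finset.sum_comm
    have h2 : ∀ T ∈ S.powerset, (m T : ℝ) ≤ ∑ j ∈ S, (if j ∈ T then x T j else 0) := by
      intro T hT
      have hTS := Finset.mem_powerset.1 hT
      have he : ∑ j ∈ S, (if j ∈ T then x T j else 0) = ∑ j ∈ T, x T j := by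
        rw [Finset.sum_ite_mem, Finset.inter_eq_right.2 hTS]
      rw [he, hrow' T]
    calc (aSet m S : ℝ) = ∑ T ∈ S.powerset, (m T : ℝ) := by rw [aSet]; push_cast; rfl
      _ ≤ ∑ T ∈ S.powerset, ∑ j ∈ S, (if j ∈ T then x T j else 0) := Finset.sum_le_sum h2
      _ ≤ ∑ T : Finset (Fin k), ∑ j ∈ S, (if j ∈ T then x T j else 0) := by
          refine Finset.sum_le_sum_of_subset_of_nonneg (Finset.subset_univ _) ?_
          intro T _ _
          refine Finset.sum_nonneg fun j _ => ?_
          by_cases h : j ∈ T <;> simp [h, hxnn T j]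
      _ = ∑ j ∈ S, c j := h1.symm
  obtain ⟨d, hdbox, hdsum, hdcon⟩ :=
    stepB_aux m L U (fracCount c * (2 ^ k + 1) + ntCount m c) c hbox hsum hcon le_rfl
  obtain ⟨y, hyrow, hycol⟩ := stepC (aSet m Finset.univ) m d (by simp [hm])
    hauniv.symm hdsum hdcon
  refine ⟨y, ?_, ?_⟩
  · intro T hT
    rw [hyrow T, hm]
    simp [hT]
  · intro j
    rw [hycol j]
    exact hdbox j
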